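/- Let G be a group that is central by a 2-Engel group, i.e. ⁅⁅x,y⁆,y⁆ ∈ Z(G) for all x,y ∈ G, and define a ⊙ b = a²ba⁻¹. Then the left loop property holds for the gyrations gyr[a,b] = conjugation by ⁅a,b⁻¹⁆: for all a,b,c ∈ G, ⁅a ⊙ b, b⁻¹⁆ · c · ⁅a ⊙ b, b⁻¹⁆⁻¹ = ⁅a,b⁻¹⁆ · c · ⁅a,b⁻¹⁆⁻¹, where a ⊙ b = a²ba⁻¹. -/

import Mathlib

open scoped commutatorElement
/-- If `G` is central by a 2-Engel group, then the left loop property holds for the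
gyrations `gyr[a,b] = conjugation by ⁅a, b⁻¹⁆`, where `a ⊙ b = a² b a⁻¹`. -/
theorem left_loop_property (G : Type*) [Group G]
    (h : ∀ x y : G, ⁅⁅x, y⁆, y⁆ ∈ Subgroup.center G) (a b c : G) :
    ⁅a ^ 2 * b * a⁻¹, b⁻¹⁆ * c * ⁅a ^ 2 * b * a⁻¹, b⁻¹⁆⁻¹ =
      ⁅a, b⁻¹⁆ * c * ⁅a, b⁻¹⁆⁻¹ := by
  have hz := (Subgroup.center G).inv_mem (h a b⁻¹)
  rw [Subgroup.mem_center_iff] at hz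
  set z := ⁅⁅a, b⁻¹⁆, b⁻¹⁆⁻¹ with hzdef
  set u := a ^ 2 * b * a⁻¹ with hu
  have key2 : ⁅u, b⁻¹⁆ = z * ⁅a, b⁻¹⁆ := by
    have key : ⁅u, b⁻¹⁆ = u * z * u⁻¹ * ⁅a, b⁻¹⁆ := by
      rw [hu, hzdef]; group
    rw [key, hz u]; group
  have final : ∀ p q : G, (z * p) * q * (z * p)⁻¹ = p * q * p⁻¹ := by
    intro p q
    rw [show z * p * q * (z * p)⁻¹ = z * (p * q * p⁻¹) * z⁻¹ from by group,
      ← hz (p * q * p⁻¹)]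
    group
  rw [key2]
  exact final _ _
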